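/- Let (g,B,S) be a quadratic Rota–Baxter Lie algebra of nonzero weight λ over a field. On the direct product Lie algebra g × g define B̂(u,x) := (Bu − (B+λ·id)x, Bu − (B+λ·id)x) and Ŝ((u,x),(v,y)) := S(u,v) − S(x,y). Then (g × g, B̂, Ŝ) is a quadratic Rota–Baxter Lie algebra of weight λ: Ŝ is nondegenerate, symmetric and invariant, and Ŝ(B̂a,b) + Ŝ(a,B̂b) + λŜ(a,b) = 0 for all a,b ∈ g × g; moreover the swap map τ(u,x) := (x,u) is a reflection on (g × g, B̂, Ŝ). -/
import Mathlib


/-- The componentwise bracket on the direct product Lie algebra `g × g`. -/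
def prodBracket {K : Type*} [Field K] {g : Type*} [LieRing g] [LieAlgebra K g]
    (a b : g × g) : g × g :=
  (⁅a.1, b.1⁆, ⁅a.2, b.2⁆)

/-- Let `(g,B,S)` be a quadratic Rota–Baxter Lie algebra of nonzero weight
`lam`. With `B̂(u,x) := (Bu − (B+lam·id)x, Bu − (B+lam·id)x)` and
`Ŝ((u,x),(v,y)) := S(u,v) − S(x,y)`, the triple `(g × g, B̂, Ŝ)` is a quadratic Rota–Baxter
Lie algebra of weight `lam`, and the swap `τ(u,x) := (x,u)` is a reflection on it. -/
theorem stmt6 (K g : Type*) [Field K] [LieRing g] [LieAlgebra K g]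
    (lam : K) (hlam : lam ≠ 0) (B : g →ₗ[K] g) (S : g →ₗ[K] g →ₗ[K] K)
    (hB : ∀ x y : g, ⁅B x, B y⁆ = B (⁅B x, y⁆ + ⁅x, B y⁆ + lam • ⁅x, y⁆))
    (hSsymm : ∀ x y : g, S x y = S y x)
    (hSnondeg : ∀ x : g, (∀ y : g, S x y = 0) → x = 0)
    (hSinv : ∀ x y z : g, S ⁅x, y⁆ z + S y ⁅x, z⁆ = 0)
    (hSB : ∀ x y : g, S x (B y) + S (B x) y + lam * S x y = 0)
    (Bhat : g × g → g × g)
    (hBhat : ∀ a : g × g, Bhat a = (B a.1 - (B a.2 + lam • a.2), B a.1 - (B a.2 + lam • a.2)))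
    (Shat : g × g → g × g → K)
    (hShat : ∀ a b : g × g, Shat a b = S a.1 b.1 - S a.2 b.2)
    (τ : g × g → g × g)
    (hτ : ∀ a : g × g, τ a = (a.2, a.1)) :
    -- `B̂` is a Rota–Baxter operator of weight `lam` on `g × g`
    (∀ a b : g × g,
      prodBracket (K := K) (Bhat a) (Bhat b) =
        Bhat (prodBracket (K := K) (Bhat a) b + prodBracket (K := K) a (Bhat b) +
          lam • prodBracket (K := K) a b)) ∧
    -- `Ŝ` is symmetric
    (∀ a b : g × g, Shat a b = Shat b a) ∧
    -- `Ŝ` is nondegenerate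
    (∀ a : g × g, (∀ b : g × g, Shat a b = 0) → a = 0) ∧
    -- `Ŝ` is invariant
    (∀ a b c : g × g, Shat (prodBracket (K := K) a b) c + Shat b (prodBracket (K := K) a c) = 0) ∧
    -- compatibility of `Ŝ` and `B̂`
    (∀ a b : g × g, Shat (Bhat a) b + Shat a (Bhat b) + lam * Shat a b = 0) ∧
    -- the swap `τ` is a Lie algebra automorphism of `g × g`
    Function.Bijective τ ∧
    (∀ a b : g × g, τ (prodBracket (K := K) a b) = prodBracket (K := K) (τ a) (τ b)) ∧
    -- `(τ − id) ∘ (B̂ + lam·id) ∘ (τ + id) = 0`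
    (∀ a : g × g,
      τ (Bhat (τ a + a) + lam • (τ a + a)) - (Bhat (τ a + a) + lam • (τ a + a)) = 0) ∧
    -- `Ŝ(τ a, b) + Ŝ(a, τ b) = 0`
    (∀ a b : g × g, Shat (τ a) b + Shat a (τ b) = 0) := by

  -- auxiliary identities
  have hcross1 : ∀ x y : g, ⁅B x, B y + lam • y⁆ =
      B ⁅x, B y + lam • y⁆ + (B ⁅B x, y⁆ + lam • ⁅B x, y⁆) := by
    intro x y
    rw [lie_add, lie_smul, hB]
    simp only [map_add, map_smul, lie_add, lie_smul]
    module
  have hcross2 : ∀ x y : g, ⁅B x + lam • x, B y⁆ =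
      B ⁅B x + lam • x, y⁆ + (B ⁅x, B y⁆ + lam • ⁅x, B y⁆) := by
    intro x y
    rw [add_lie, smul_lie, hB]
    simp only [map_add, map_smul, lie_add, lie_smul, add_lie, smul_lie]
    module
  have hBt : ∀ x y : g, ⁅B x + lam • x, B y + lam • y⁆ =
      (B (⁅B x + lam • x, y⁆ + ⁅x, B y + lam • y⁆ - lam • ⁅x, y⁆)
        + lam • (⁅B x + lam • x, y⁆ + ⁅x, B y + lam • y⁆ - lam • ⁅x, y⁆)) := by
    intro x y
    rw [add_lie, smul_lie, lie_add, lie_smul, lie_add, lie_smul, hB]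
    simp only [map_add, map_sub, map_smul, lie_add, lie_smul, add_lie, smul_lie]
    module
  refine ⟨?_, ?_, ?_, ?_, ?_, ?_, ?_, ?_, ?_⟩
  · -- Rota–Baxter identity
    intro a b
    have key : ⁅B a.1 - (B a.2 + lam • a.2), B b.1 - (B b.2 + lam • b.2)⁆ =
        B (⁅B a.1 - (B a.2 + lam • a.2), b.1⁆ + ⁅a.1, B b.1 - (B b.2 + lam • b.2)⁆
            + lam • ⁅a.1, b.1⁆)
          - (B (⁅B a.1 - (B a.2 + lam • a.2), b.2⁆ + ⁅a.2, B b.1 - (B b.2 + lam • b.2)⁆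
            + lam • ⁅a.2, b.2⁆)
          + lam • (⁅B a.1 - (B a.2 + lam • a.2), b.2⁆ + ⁅a.2, B b.1 - (B b.2 + lam • b.2)⁆
            + lam • ⁅a.2, b.2⁆)) := by
      rw [sub_lie, lie_sub, lie_sub, hB, hcross1, hcross2, hBt]
      simp only [map_add, map_sub, map_smul, lie_add, lie_sub, lie_smul, add_lie, sub_lie,
        smul_lie, smul_add, smul_sub]
      module
    simp only [prodBracket, hBhat, Prod.mk_add_mk, Prod.smul_mk, Prod.mk.injEq]
    exact ⟨key, key⟩
  · intro a b
    simp only [hShat, hSsymm a.1 b.1, hSsymm a.2 b.2]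
  · -- nondegeneracy
    intro a h
    have h1 : a.1 = 0 := by
      apply hSnondeg
      intro y
      have := h (y, 0)
      simpa [hShat] using this
    have h2 : a.2 = 0 := by
      apply hSnondeg
      intro y
      have h' := h (0, y)
      simp [hShat] at h'
      simpa using h' 
    exact Prod.ext h1 h2
  · -- invariance
    intro a b c
    simp only [hShat, prodBracket]
    have h1 := hSinv a.1 b.1 c.1
    have h2 := hSinv a.2 b.2 c.2
    linear_combination h1 - h2
  · -- compatibility
    intro a b
    simp only [hShat, hBhat, map_add, map_sub, map_smul, LinearMap.sub_apply,
      LinearMap.add_apply, LinearMap.smul_apply, smul_eq_mul]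
    linear_combination hSB a.1 b.1 + hSB a.2 b.2 - hSB a.2 b.1 - hSB a.1 b.2
  · -- τ bijective
    have : Function.Involutive τ := by
      intro a
      simp [hτ]
    exact this.bijective
  · intro a b
    simp [hτ, prodBracket]
  · intro a
    simp [hτ, hBhat, Prod.ext_iff, add_comm a.2 a.1]
    constructor <;> abel
  · intro a b
    simp only [hShat, hτ]
    ring
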